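/- Let R be a ring with a complete multiplicative filtration I, i.e. I : ℕ → AddSubgroup R satisfies I 0 = R, I (k+1) ⊆ I k, x ∈ I j and y ∈ I k imply x·y ∈ I (j+k), and for every sequence x : ℕ → R with x k ∈ I k for all k there exists y ∈ R with y − (x 0 + x 1 + ⋯ + x (n−1)) ∈ I n for every n. If S_0 ∈ R satisfies S_0^2 − S_0 ∈ I 1, then there exists S ∈ R with S − S_0 ∈ I 1 and S^2 − S ∈ I k for every k ∈ ℕ. -/

import Mathlib

/-- in a ring with a complete multiplicative filtration, any `S₀` with
`S₀² - S₀ ∈ I 1` can be corrected to `S` with `S - S₀ ∈ I 1` which is an idempotent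
modulo every `I k`. -/
theorem szego_operator_exists {R : Type*} [Ring R] (I : ℕ → AddSubgroup R)
    (hI0 : I 0 = ⊤) (hmono : ∀ k, I (k + 1) ≤ I k)
    (hmul : ∀ (j k : ℕ) (x y : R), x ∈ I j → y ∈ I k → x * y ∈ I (j + k))
    (hcomplete : ∀ x : ℕ → R, (∀ k, x k ∈ I k) →
      ∃ y : R, ∀ n, y - (∑ i ∈ Finset.range n, x i) ∈ I n)
    (S₀ : R) (hS₀ : S₀ ^ 2 - S₀ ∈ I 1) :
    ∃ S : R, S - S₀ ∈ I 1 ∧ ∀ k : ℕ, S ^ 2 - S ∈ I k := by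
  have hanti : ∀ {m n : ℕ}, m ≤ n → I n ≤ I m := by
    intro m n h
    induction n, h using Nat.le_induction with
    | base => exact le_rfl
    | succ n h ih => exact (hmono n).trans ih
  have hmul0 : ∀ (k : ℕ) (x y : R), x ∈ I k → x * y ∈ I k := by
    intro k x y hx
    simpa using hmul k 0 x y hx (by simp [hI0])
  have hmul0' : ∀ (k : ℕ) (x y : R), y ∈ I k → x * y ∈ I k := by
    intro k x y hy
    simpa using hmul 0 k x y (by simp [hI0]) hy
  set T : ℕ → R := fun n => Nat.rec S₀ (fun _ s => 3 * s ^ 2 - 2 * s ^ 3) n with hT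
  have hTsucc : ∀ n, T (n + 1) = 3 * (T n) ^ 2 - 2 * (T n) ^ 3 := fun n => rfl
  have he : ∀ n, (T n) ^ 2 - T n ∈ I (2 ^ n) := by
    intro n
    induction n with
    | zero => exact hS₀
    | succ n ih =>
      have key : (T (n + 1)) ^ 2 - T (n + 1)
          = ((T n) ^ 2 - T n) * (((T n) ^ 2 - T n) * ((1 - 2 * T n) ^ 2 - 4)) := by
        rw [hTsucc]; noncomm_ring
      have h2 : 2 ^ (n + 1) = 2 ^ n + 2 ^ n := by rw [pow_succ, mul_two]
      rw [key, h2]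
      exact hmul _ _ _ _ ih (hmul0 _ _ _ ih)
  have hd : ∀ n, T (n + 1) - T n ∈ I (2 ^ n) := by
    intro n
    have key : T (n + 1) - T n = ((T n) ^ 2 - T n) * (1 - 2 * T n) := by
      rw [hTsucc]; noncomm_ring
    rw [key]; exact hmul0 _ _ _ (he n)
  have hpow : ∀ n : ℕ, n + 1 ≤ 2 ^ n := fun n => Nat.lt_two_pow_self (n := n)
  set x : ℕ → R := fun k => Nat.casesOn k S₀ (fun m => T (m + 1) - T m) with hx
  have hxmem : ∀ k, x k ∈ I k := by
    intro k
    cases k with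
    | zero => simp [hx, hI0]
    | succ m => exact hanti (hpow m) (hd m)
  have hsum : ∀ n, (∑ i ∈ Finset.range (n + 1), x i) = T n := by
    intro n
    induction n with
    | zero => rw [Finset.sum_range_one]; rfl
    | succ n ih =>
      rw [Finset.sum_range_succ, ih]
      show T n + (T (n + 1) - T n) = T (n + 1)
      abel
  obtain ⟨S, hS⟩ := hcomplete x hxmem
  have hST : ∀ n, S - T n ∈ I (n + 1) := by
    intro n
    have := hS (n + 1)
    rwa [hsum n] at this
  refine ⟨S, ?_, ?_⟩
  · exact hST 0
  · intro k
    cases k with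
    | zero => simp [hI0]
    | succ n =>
      have key : S ^ 2 - S
          = (S - T n) * S + T n * (S - T n) - (S - T n) + ((T n) ^ 2 - T n) := by
        noncomm_ring
      rw [key]
      refine AddSubgroup.add_mem _ (AddSubgroup.sub_mem _
        (AddSubgroup.add_mem _ ?_ ?_) (hST n)) (hanti (hpow n) (he n))
      · exact hmul0 _ _ _ (hST n)
      · exact hmul0' _ _ _ (hST n)
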